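/- With γ_A = 1/16, γ_B = (13√13−35)/108, δ₁ = 0.0309587, δ₂ = 0.0165525, and η(k) defined by η(0)=1 and η(k) = c₁t₁^k + c₂t₂^k − c₃t₃^k − c₄t₄^k for k ≥ 1 (constants as in the paper), we have for every integer k ≥ 0: η(k) ≤ (2/3)^k (1−δ₁)^{max(k−1,0)} (1−δ₂)^{max(k−2,0)}. -/

import Mathlib

noncomputable def γA : ℝ := 1 / 16
noncomputable def γB : ℝ := (13 * Real.sqrt 13 - 35) / 108

noncomputable def c₁ : ℝ := 8 / (3 - γB) ^ 2
noncomputable def c₂ : ℝ := (1 + γB) ^ 2 / ((1 - γA) * (1 - γB) * (3 - γB) ^ 2)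
noncomputable def c₃ : ℝ := γA * (1 + γB) ^ 2 / ((1 - γA) * (1 - γB) * (3 - γB) ^ 2)
noncomputable def c₄ : ℝ := γB / ((1 - γA) * (1 - γB))
noncomputable def t₁ : ℝ := (2 - γB) / 3
noncomputable def t₂ : ℝ := (4 - 3 * γA - 2 * γB + γA * γB) / 6
noncomputable def t₃ : ℝ := (1 - γB) / 6
noncomputable def t₄ : ℝ := (1 - γA) / 3

noncomputable def η (k : ℕ) : ℝ :=
  if k = 0 then 1 else c₁ * t₁ ^ k + c₂ * t₂ ^ k - c₃ * t₃ ^ k - c₄ * t₄ ^ k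

noncomputable def δ₁ : ℝ := 0.0309587
noncomputable def δ₂ : ℝ := 0.0165525

lemma hsq : Real.sqrt 13 ^ 2 = 13 := Real.sq_sqrt (by norm_num)
lemma hslo : (3.605551275463989:ℝ) ≤ Real.sqrt 13 := by
  have h : Real.sqrt ((3.605551275463989:ℝ)^2) ≤ Real.sqrt 13 := Real.sqrt_le_sqrt (by norm_num)
  rwa [Real.sqrt_sq (by norm_num)] at h
lemma hshi : Real.sqrt 13 ≤ (3.605551275463990:ℝ) := by
  have h : Real.sqrt 13 ≤ Real.sqrt ((3.605551275463990:ℝ)^2) := Real.sqrt_le_sqrt (by norm_num)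
  rwa [Real.sqrt_sq (by norm_num)] at h
lemma hB1 : (0.109:ℝ) ≤ γB := by unfold γB; linarith [hslo]
lemma hB2 : γB ≤ (0.11:ℝ) := by unfold γB; linarith [hshi]
lemma hD : (0:ℝ) < (1 - γA) * (1 - γB) * (3 - γB)^2 := by
  have h1 := hB1; have h2 := hB2; unfold γA; nlinarith

lemma key (k : ℕ) (hk : k ≠ 0) : η k * ((1 - γA) * (1 - γB) * (3 - γB)^2)
    = 8*(1-γA)*(1-γB)*t₁^k + (1+γB)^2*t₂^k - γA*(1+γB)^2*t₃^k - γB*(3-γB)^2*t₄^k := by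
  have hne3 : (3:ℝ) - γB ≠ 0 := by have := hB2; intro h; linarith
  have hne1 : (1:ℝ) - γB ≠ 0 := by have := hB2; intro h; linarith
  have hneA : (1:ℝ) - γA ≠ 0 := by norm_num [γA]
  simp only [η, if_neg hk, c₁, c₂, c₃, c₄]
  field_simp

lemma hp3 : Real.sqrt 13 ^ 3 = (13 : ℝ) * Real.sqrt 13 := by
  linear_combination (Real.sqrt 13 * (Real.sqrt 13 ^ 0 * 1)) * hsq

lemma hp4 : Real.sqrt 13 ^ 4 = (169 : ℝ) := by
  linear_combination (Real.sqrt 13 ^ 2 * 1 + Real.sqrt 13 ^ 0 * 13) * hsq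

lemma hp5 : Real.sqrt 13 ^ 5 = (169 : ℝ) * Real.sqrt 13 := by
  linear_combination (Real.sqrt 13 * (Real.sqrt 13 ^ 2 * 1 + Real.sqrt 13 ^ 0 * 13)) * hsq

lemma hp6 : Real.sqrt 13 ^ 6 = (2197 : ℝ) := by
  linear_combination (Real.sqrt 13 ^ 4 * 1 + Real.sqrt 13 ^ 2 * 13 + Real.sqrt 13 ^ 0 * 169) * hsq

lemma hp7 : Real.sqrt 13 ^ 7 = (2197 : ℝ) * Real.sqrt 13 := by
  linear_combination (Real.sqrt 13 * (Real.sqrt 13 ^ 4 * 1 + Real.sqrt 13 ^ 2 * 13 + Real.sqrt 13 ^ 0 * 169)) * hsq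

lemma hp8 : Real.sqrt 13 ^ 8 = (28561 : ℝ) := by
  linear_combination (Real.sqrt 13 ^ 6 * 1 + Real.sqrt 13 ^ 4 * 13 + Real.sqrt 13 ^ 2 * 169 + Real.sqrt 13 ^ 0 * 2197) * hsq

lemma hp9 : Real.sqrt 13 ^ 9 = (28561 : ℝ) * Real.sqrt 13 := by
  linear_combination (Real.sqrt 13 * (Real.sqrt 13 ^ 6 * 1 + Real.sqrt 13 ^ 4 * 13 + Real.sqrt 13 ^ 2 * 169 + Real.sqrt 13 ^ 0 * 2197)) * hsq

lemma hp10 : Real.sqrt 13 ^ 10 = (371293 : ℝ) := by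
  linear_combination (Real.sqrt 13 ^ 8 * 1 + Real.sqrt 13 ^ 6 * 13 + Real.sqrt 13 ^ 4 * 169 + Real.sqrt 13 ^ 2 * 2197 + Real.sqrt 13 ^ 0 * 28561) * hsq

lemma hp11 : Real.sqrt 13 ^ 11 = (371293 : ℝ) * Real.sqrt 13 := by
  linear_combination (Real.sqrt 13 * (Real.sqrt 13 ^ 8 * 1 + Real.sqrt 13 ^ 6 * 13 + Real.sqrt 13 ^ 4 * 169 + Real.sqrt 13 ^ 2 * 2197 + Real.sqrt 13 ^ 0 * 28561)) * hsq

lemma hp12 : Real.sqrt 13 ^ 12 = (4826809 : ℝ) := by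
  linear_combination (Real.sqrt 13 ^ 10 * 1 + Real.sqrt 13 ^ 8 * 13 + Real.sqrt 13 ^ 6 * 169 + Real.sqrt 13 ^ 4 * 2197 + Real.sqrt 13 ^ 2 * 28561 + Real.sqrt 13 ^ 0 * 371293) * hsq

lemma ineq1 : 8*(1-γA)*(1-γB)*t₁^1 + (1+γB)^2*t₂^1 - γA*(1+γB)^2*t₃^1 - γB*(3-γB)^2*t₄^1
    ≤ (2/3 : ℝ) * ((1 - γA) * (1 - γB) * (3 - γB)^2) := by
  simp only [t₁, t₂, t₃, t₄, γA, γB]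
  ring_nf
  linarith [hsq, hp3, hp4, hp5, hp6, hp7, hp8, hp9, hp10, hp11, hp12, hslo, hshi]

lemma ineq2 : 8*(1-γA)*(1-γB)*t₁^2 + (1+γB)^2*t₂^2 - γA*(1+γB)^2*t₃^2 - γB*(3-γB)^2*t₄^2
    ≤ (9690413/22500000 : ℝ) * ((1 - γA) * (1 - γB) * (3 - γB)^2) := by
  simp only [t₁, t₂, t₃, t₄, γA, γB]
  ring_nf
  linarith [hsq, hp3, hp4, hp5, hp6, hp7, hp8, hp9, hp10, hp11, hp12, hslo, hshi]

lemma ineq3 : 8*(1-γA)*(1-γB)*t₁^3 + (1+γB)^2*t₂^3 - γA*(1+γB)^2*t₃^3 - γB*(3-γB)^2*t₄^3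
    ≤ (36939902570911522651/135000000000000000000 : ℝ) * ((1 - γA) * (1 - γB) * (3 - γB)^2) := by
  simp only [t₁, t₂, t₃, t₄, γA, γB]
  ring_nf
  linarith [hsq, hp3, hp4, hp5, hp6, hp7, hp8, hp9, hp10, hp11, hp12, hslo, hshi]

lemma ineq4 : 8*(1-γA)*(1-γB)*t₁^4 + (1+γB)^2*t₂^4 - γA*(1+γB)^2*t₃^4 - γB*(3-γB)^2*t₄^4
    ≤ (140815092395797343285307561162077/810000000000000000000000000000000 : ℝ) * ((1 - γA) * (1 - γB) * (3 - γB)^2) := by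
  simp only [t₁, t₂, t₃, t₄, γA, γB]
  ring_nf
  linarith [hsq, hp3, hp4, hp5, hp6, hp7, hp8, hp9, hp10, hp11, hp12, hslo, hshi]

lemma ineq5 : 8*(1-γA)*(1-γB)*t₁^5 + (1+γB)^2*t₂^5 - γA*(1+γB)^2*t₃^5 - γB*(3-γB)^2*t₄^5
    ≤ (536787832842073695387960467466311390065489579/4860000000000000000000000000000000000000000000 : ℝ) * ((1 - γA) * (1 - γB) * (3 - γB)^2) := by
  simp only [t₁, t₂, t₃, t₄, γA, γB]
  ring_nf
  linarith [hsq, hp3, hp4, hp5, hp6, hp7, hp8, hp9, hp10, hp11, hp12, hslo, hshi]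

lemma ineq6 : 8*(1-γA)*(1-γB)*t₁^6 + (1+γB)^2*t₂^6 - γA*(1+γB)^2*t₃^6 - γB*(3-γB)^2*t₄^6
    ≤ (2046237889596340504043312694554359830183557953523168533133/29160000000000000000000000000000000000000000000000000000000 : ℝ) * ((1 - γA) * (1 - γB) * (3 - γB)^2) := by
  simp only [t₁, t₂, t₃, t₄, γA, γB]
  ring_nf
  linarith [hsq, hp3, hp4, hp5, hp6, hp7, hp8, hp9, hp10, hp11, hp12, hslo, hshi]

lemma ineq7 : 8*(1-γA)*(1-γB)*t₁^7 + (1+γB)^2*t₂^7 - γA*(1+γB)^2*t₃^7 - γB*(3-γB)^2*t₄^7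
    ≤ (7800269016253118111024387052752700870630025712537872267573158153636091/174960000000000000000000000000000000000000000000000000000000000000000000 : ℝ) * ((1 - γA) * (1 - γB) * (3 - γB)^2) := by
  simp only [t₁, t₂, t₃, t₄, γA, γB]
  ring_nf
  linarith [hsq, hp3, hp4, hp5, hp6, hp7, hp8, hp9, hp10, hp11, hp12, hslo, hshi]

lemma base8 : (8*(1-γA)*(1-γB) + (1+γB)^2) * t₁^8
    ≤ (29734664300405983870052959035928735140329162759394312510410868743133647578518944957/1049760000000000000000000000000000000000000000000000000000000000000000000000000000000 : ℝ) * ((1 - γA) * (1 - γB) * (3 - γB)^2) := by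
  simp only [t₁, γA, γB]
  ring_nf
  linarith [hsq, hp3, hp4, hp5, hp6, hp7, hp8, hp9, hp10, hp11, hp12, hslo, hshi]

lemma etale (k : ℕ) (hk : k ≠ 0) : η k * ((1 - γA) * (1 - γB) * (3 - γB)^2)
    ≤ (8*(1-γA)*(1-γB) + (1+γB)^2) * t₁^k := by
  rw [key k hk]
  have h1 := hB1; have h2 := hB2
  have ht21 : t₂ ≤ t₁ := by unfold t₁ t₂ γA; linarith
  have ht2 : (0:ℝ) ≤ t₂ := by unfold t₂ γA; linarith
  have hc2 : (0:ℝ) ≤ (1+γB)^2 := by positivity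
  have h3 : γA*(1+γB)^2*t₃^k ≥ 0 := by
    apply mul_nonneg (by unfold γA; positivity)
    apply pow_nonneg; unfold t₃; linarith
  have h4 : γB*(3-γB)^2*t₄^k ≥ 0 := by
    apply mul_nonneg (by nlinarith)
    apply pow_nonneg; unfold t₄ γA; norm_num
  have h5 : (1+γB)^2*t₂^k ≤ (1+γB)^2*t₁^k :=
    mul_le_mul_of_nonneg_left (pow_le_pow_left₀ ht2 ht21 k) hc2
  nlinarith [h3, h4, h5]

lemma ht1q : t₁ ≤ (2/3) * (1 - δ₁) * (1 - δ₂) := by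
  have := hB1; unfold t₁ δ₁ δ₂; norm_num; linarith

lemma ht1pos : (0:ℝ) ≤ t₁ := by have := hB2; unfold t₁; linarith

lemma tail : ∀ m : ℕ, (8*(1-γA)*(1-γB) + (1+γB)^2) * t₁^(8+m)
    ≤ ((2/3:ℝ)^(8+m) * (1-δ₁)^(7+m) * (1-δ₂)^(6+m)) * ((1 - γA) * (1 - γB) * (3 - γB)^2) := by
  intro m
  induction m with
  | zero =>
    have := base8
    have e : ((2/3:ℝ)^8 * (1-δ₁)^7 * (1-δ₂)^6) = (29734664300405983870052959035928735140329162759394312510410868743133647578518944957/1049760000000000000000000000000000000000000000000000000000000000000000000000000000000 : ℝ) := by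
      unfold δ₁ δ₂; norm_num
    simpa [e] using this
  | succ m ih =>
    have hq := ht1q
    have hp := ht1pos
    have hRpos : (0:ℝ) ≤ (2/3:ℝ)^(8+m) * (1-δ₁)^(7+m) * (1-δ₂)^(6+m) := by
      unfold δ₁ δ₂; positivity
    have hDp := le_of_lt hD
    calc (8*(1-γA)*(1-γB) + (1+γB)^2) * t₁^(8+(m+1))
        = ((8*(1-γA)*(1-γB) + (1+γB)^2) * t₁^(8+m)) * t₁ := by
          rw [show 8+(m+1) = (8+m)+1 from rfl, pow_succ]; ring
      _ ≤ (((2/3:ℝ)^(8+m) * (1-δ₁)^(7+m) * (1-δ₂)^(6+m)) * ((1 - γA) * (1 - γB) * (3 - γB)^2)) * t₁ :=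
          mul_le_mul_of_nonneg_right ih hp
      _ ≤ (((2/3:ℝ)^(8+m) * (1-δ₁)^(7+m) * (1-δ₂)^(6+m)) * ((1 - γA) * (1 - γB) * (3 - γB)^2)) * ((2/3) * (1 - δ₁) * (1 - δ₂)) := by
          apply mul_le_mul_of_nonneg_left hq
          exact mul_nonneg hRpos hDp
      _ = ((2/3:ℝ)^(8+(m+1)) * (1-δ₁)^(7+(m+1)) * (1-δ₂)^(6+(m+1))) * ((1 - γA) * (1 - γB) * (3 - γB)^2) := by
          rw [show 8+(m+1) = (8+m)+1 from rfl, show 7+(m+1) = (7+m)+1 from rfl,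
              show 6+(m+1) = (6+m)+1 from rfl, pow_succ, pow_succ, pow_succ]
          ring

theorem stmt_11 (k : ℕ) :
    η k ≤ (2 / 3 : ℝ) ^ k * (1 - δ₁) ^ (k - 1) * (1 - δ₂) ^ (k - 2) := by
  by_cases hk8 : k ≤ 7
  · interval_cases k
    · simp [η]
    all_goals {
      refine le_of_mul_le_mul_right ?_ hD
      refine le_trans (le_of_eq (key _ (by norm_num))) ?_
      refine le_trans (by first
        | exact ineq1 | exact ineq2 | exact ineq3 | exact ineq4
        | exact ineq5 | exact ineq6 | exact ineq7) (le_of_eq ?_)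
      unfold δ₁ δ₂; norm_num
    }
  · obtain ⟨m, rfl⟩ : ∃ m, k = 8 + m := ⟨k - 8, by omega⟩
    rw [show 8+m-1 = 7+m from by omega, show 8+m-2 = 6+m from by omega]
    refine le_of_mul_le_mul_right ?_ hD
    exact le_trans (etale _ (by omega)) (tail m)
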